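/- Let $N \geq 1$ and $\lambda \in \mathbb{Z}^N$ weakly decreasing. The product $\prod_{1 \leq i < j \leq N} \frac{\lambda_i - \lambda_j + j - i}{j-i}$ is a positive integer (i.e., the denominator product divides the numerator product and the quotient is at least 1). -/

import Mathlib

/-- The hook-content product computing `dim S_λ(ℂ^N)`. -/
def hookProd (N : ℕ) (lam : Fin N → ℤ) : ℚ :=
  ∏ q ∈ Finset.univ.filter (fun q : Fin N × Fin N => q.1 < q.2),
    (((lam q.1 : ℚ) - (lam q.2 : ℚ) + ((q.2 : ℕ) : ℚ) - ((q.1 : ℕ) : ℚ)) /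
      (((q.2 : ℕ) : ℚ) - ((q.1 : ℕ) : ℚ)))

lemma pairProd {M : Type*} [CommMonoid M] (N : ℕ) (f : Fin N → Fin N → M) :
    ∏ q ∈ Finset.univ.filter (fun q : Fin N × Fin N => q.1 < q.2), f q.1 q.2 =
      ∏ i, ∏ j ∈ Finset.Ioi i, f i j := by
  rw [Finset.prod_sigma']
  refine Finset.prod_nbij' (fun q => ⟨q.1, q.2⟩) (fun p => (p.1, p.2)) ?_ ?_ ?_ ?_ ?_ <;>
    simp [Finset.mem_Ioi]

/-- for weakly decreasing `λ` the hook-content product is a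
positive integer. -/
theorem stmt_3 (N : ℕ) (hN : 1 ≤ N) (lam : Fin N → ℤ) (hdec : Antitone lam) :
    ∃ d : ℕ, hookProd N lam = (d : ℚ) ∧ 1 ≤ d := by
  obtain ⟨n, rfl⟩ : ∃ n, N = n + 1 := ⟨N - 1, (Nat.succ_pred_eq_of_pos hN).symm⟩
  set v : Fin (n + 1) → ℤ := fun i => (i : ℤ) - lam i with hv
  set Nm : ℤ := ∏ i, ∏ j ∈ Finset.Ioi i, (v j - v i) with hNm
  have hvd : (Nat.superFactorial n : ℤ) ∣ Nm := by
    have := Matrix.superFactorial_dvd_vandermonde_det v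
    rwa [Matrix.det_vandermonde] at this
  obtain ⟨d, hd⟩ := hvd
  have hfac : ∀ i j : Fin (n + 1), i < j → 0 < v j - v i := by
    intro i j hij
    have h1 : lam j ≤ lam i := hdec hij.le
    have h2 : (i : ℤ) < (j : ℤ) := by exact_mod_cast hij
    simp only [hv]; omega
  have hNmpos : 0 < Nm := by
    refine Finset.prod_pos fun i _ => Finset.prod_pos fun j hj => ?_
    exact hfac i j (Finset.mem_Ioi.mp hj)
  have hsfn : 0 < Nat.superFactorial n := by
    rw [← Nat.prod_range_succ_factorial]
    exact Finset.prod_pos fun x _ => x.factorial_pos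
  have hsf : (0 : ℤ) < (Nat.superFactorial n : ℤ) := by exact_mod_cast hsfn
  have hdpos : 0 < d := by
    by_contra h
    push_neg at h
    have : Nm ≤ 0 := hd ▸ mul_nonpos_of_nonneg_of_nonpos hsf.le h
    omega
  refine ⟨d.toNat, ?_, by omega⟩
  have hD : ((Nat.superFactorial n : ℤ) : ℚ) =
      ∏ i : Fin (n + 1), ∏ j ∈ Finset.Ioi i, (((j : ℕ) : ℚ) - ((i : ℕ) : ℚ)) := by
    have := Matrix.det_vandermonde_id_eq_superFactorial (R := ℚ) n
    rw [Matrix.det_vandermonde] at this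
    exact_mod_cast this.symm
  have hDpos : (0 : ℚ) < ∏ i : Fin (n + 1), ∏ j ∈ Finset.Ioi i,
      (((j : ℕ) : ℚ) - ((i : ℕ) : ℚ)) := by
    rw [← hD]; exact_mod_cast hsf
  rw [hookProd, pairProd (n + 1)
      (fun i j => (((lam i : ℚ) - (lam j : ℚ) + ((j : ℕ) : ℚ) - ((i : ℕ) : ℚ)) /
        (((j : ℕ) : ℚ) - ((i : ℕ) : ℚ))))]
  rw [Finset.prod_congr rfl fun i _ => Finset.prod_div_distrib _ _,
    Finset.prod_div_distrib _ _]
  have hnum : (∏ i : Fin (n + 1), ∏ j ∈ Finset.Ioi i,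
      ((lam i : ℚ) - (lam j : ℚ) + ((j : ℕ) : ℚ) - ((i : ℕ) : ℚ))) = ((Nm : ℤ) : ℚ) := by
    push_cast [hNm, hv]
    refine Finset.prod_congr rfl fun i _ => Finset.prod_congr rfl fun j _ => by ring
  have hne : ((Nat.superFactorial n : ℤ) : ℚ) ≠ 0 := by
    exact_mod_cast hsf.ne'
  have htn : ((d.toNat : ℕ) : ℚ) = (d : ℚ) := by
    exact_mod_cast congrArg (Int.cast : ℤ → ℚ) (Int.toNat_of_nonneg hdpos.le)
  rw [hnum, ← hD, hd, htn]
  push_cast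
  rw [mul_comm, mul_div_assoc, div_self (show ((Nat.superFactorial n : ℚ)) ≠ 0 by exact_mod_cast hsfn.ne'), mul_one]
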